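/- arXiv:2112.13462 — 5 statements merged into one kernel-verified Lean document; each statement's English description precedes it below -/
import Mathlib

section
/- Let M be a matroid on ground set E and F a flat of M. Let Z(F) be the union of all circuits of M contained in F. Then the closure of the complement E ∖ F in the dual matroid M* equals the complement E ∖ Z(F). -/
/-- A circuit of a matroid: a minimal dependent set. -/
def MatroidCircuit {α : Type*} (M : Matroid α) (C : Set α) : Prop := Minimal M.Dep C

/-- `Z(F)`: the union of all circuits of `M` contained in `F`. -/
def cyclicPart {α : Type*} (M : Matroid α) (F : Set α) : Set α :=
  ⋃₀ {C | MatroidCircuit M C ∧ C ⊆ F}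

open Set

/-- Every element of a circuit is spanned by the rest of the circuit. -/
lemma MatroidCircuit.mem_closure_diff {α : Type*} {M : Matroid α} {C : Set α}
    (hC : MatroidCircuit M C) {e : α} (he : e ∈ C) : e ∈ M.closure (C \ {e}) := by
  have hCE : C ⊆ M.E := hC.prop.subset_ground
  have hind : M.Indep (C \ {e}) := by
    by_contra hni
    have hdep : M.Dep (C \ {e}) := Matroid.dep_of_not_indep hni (diff_subset.trans hCE)
    have := hC.2 hdep diff_subset
    exact (this he).2 rfl
  have hins : M.Dep (insert e (C \ {e})) := by
    rw [insert_diff_singleton, insert_eq_self.mpr he]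
    exact hC.prop
  exact (hind.insert_dep_iff.mp hins).1

/-- Fundamental circuit: if `e ∈ cl(J) \ J` with `J` independent, there is a circuit
through `e` inside `insert e J`. -/
lemma exists_circuit_of_mem_closure {α : Type*} {M : Matroid α} {J : Set α} {e : α}
    (hJ : M.Indep J) (heJ : e ∉ J) (hecl : e ∈ M.closure J) :
    ∃ C, MatroidCircuit M C ∧ e ∈ C ∧ C ⊆ insert e J := by
  set Js : Set (Set α) := {K | K ⊆ J ∧ e ∈ M.closure K} with hJs
  have hJmem : J ∈ Js := ⟨Subset.rfl, hecl⟩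
  have hne : Js.Nonempty := ⟨J, hJmem⟩
  set J0 : Set α := ⋂₀ Js with hJ0
  have hJ0J : J0 ⊆ J := sInter_subset_of_mem hJmem
  have hclJ0 : e ∈ M.closure J0 := by
    have := hJ.closure_sInter_eq_biInter_closure_of_forall_subset hne (fun K hK => hK.1)
    rw [hJ0, this]
    exact mem_biInter (fun K hK => hK.2)
  have hJ0ind : M.Indep J0 := hJ.subset hJ0J
  have heJ0 : e ∉ J0 := fun h => heJ (hJ0J h)
  refine ⟨insert e J0, ⟨hJ0ind.insert_dep_iff.mpr ⟨hclJ0, heJ0⟩, ?_⟩, mem_insert _ _,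
    insert_subset_insert hJ0J⟩
  intro D hD hDC
  have heD : e ∈ D := by
    by_contra heD
    have hDJ0 : D ⊆ J0 := fun x hx => ((hDC hx).resolve_left (fun h => heD (h ▸ hx)))
    exact hD.not_indep (hJ0ind.subset hDJ0)
  have hD'sub : D \ {e} ⊆ J0 := fun x hx =>
    ((hDC hx.1).resolve_left (fun h => hx.2 h))
  have hD'ind : M.Indep (D \ {e}) := hJ0ind.subset hD'sub
  have hdepD : M.Dep (insert e (D \ {e})) := by
    rwa [insert_diff_singleton, insert_eq_self.mpr heD]
  have heclD : e ∈ M.closure (D \ {e}) := (hD'ind.insert_dep_iff.mp hdepD).1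
  have hmem : D \ {e} ∈ Js := ⟨hD'sub.trans hJ0J, heclD⟩
  have : J0 ⊆ D \ {e} := sInter_subset_of_mem hmem
  exact insert_subset heD (this.trans diff_subset)

/-- Dual closure membership criterion. -/
lemma mem_dual_closure_iff {α : Type*} {M : Matroid α} {X : Set α} {e : α}
    (hX : X ⊆ M.E) (he : e ∈ M.E) (heX : e ∉ X) :
    e ∈ M✶.closure X ↔ e ∉ M.closure ((M.E \ X) \ {e}) := by
  set Y : Set α := (M.E \ X) \ {e} with hY
  obtain ⟨I, hI⟩ := M✶.exists_isBasis X (by rwa [Matroid.dual_ground])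
  have hIindep : M✶.Indep I := hI.indep
  have hIX : I ⊆ X := hI.subset
  have hIE : I ⊆ M.E := hIX.trans hX
  have heI : e ∉ I := fun h => heX (hIX h)
  have hclXI : M✶.closure I = M✶.closure X := hI.closure_eq_closure
  have heE' : e ∈ M✶.E := he
  constructor
  · -- e ∈ cl*(X) → e ∉ cl(Y); contrapositive
    intro hecl heY
    rw [← hclXI] at hecl
    -- show insert e I is coindependent, contradicting hecl
    have hspI : M.Spanning (M.E \ I) :=
      (Matroid.coindep_def.mpr hIindep).compl_spanning
    have hsub : M.E \ I ⊆ M.closure (M.E \ insert e I) := by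
      intro t ht
      by_cases hte : t = e
      · subst hte
        refine Matroid.closure_subset_closure M ?_ heY
        intro y hy
        exact ⟨hy.1.1, fun h => (mem_insert_iff.mp h).elim
          (fun h' => hy.2 (mem_singleton_iff.mpr h')) (fun h' => hy.1.2 (hIX h'))⟩
      · exact M.subset_closure _ diff_subset ⟨ht.1, fun h =>
          (mem_insert_iff.mp h).elim hte (fun h' => ht.2 h')⟩
    have hsp : M.Spanning (M.E \ insert e I) := by
      rw [Matroid.spanning_iff_ground_subset_closure diff_subset]
      calc M.E = M.closure (M.E \ I) := hspI.closure_eq.symm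
        _ ⊆ M.closure (M.closure (M.E \ insert e I)) := Matroid.closure_subset_closure M hsub
        _ = M.closure (M.E \ insert e I) := by rw [Matroid.closure_closure]
    have hco : M.Coindep (insert e I) :=
      (Matroid.coindep_iff_compl_spanning (insert_subset he hIE)).mpr hsp
    have hind : M✶.Indep (insert e I) := Matroid.coindep_def.mp hco
    exact (hIindep.notMem_closure_iff heE').mpr ⟨hind, heI⟩ hecl
  · -- e ∉ cl(Y) → e ∈ cl*(X)
    intro heY
    by_contra hecl
    rw [← hclXI] at hecl
    have hind : M✶.Indep (insert e I) :=
      ((hIindep.notMem_closure_iff heE').mp hecl).1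
    have hsp : M.Spanning (M.E \ insert e I) :=
      (Matroid.coindep_def.mpr hind).compl_spanning
    -- J : basis of Y
    obtain ⟨J, hJ⟩ := M.exists_isBasis Y (diff_subset.trans diff_subset)
    have hJY : J ⊆ Y := hJ.subset
    have heJcl : e ∉ M.closure J := by rwa [hJ.closure_eq_closure]
    have heJ : e ∉ J := fun h => (hJY h).2 rfl
    have hJind : M.Indep J := hJ.indep
    have heJind : M.Indep (insert e J) :=
      ((hJind.notMem_closure_iff he).mp heJcl).1
    -- S' := (X \ I) ∪ J is spanning
    have hS'E : (X \ I) ∪ J ⊆ M.E := union_subset (diff_subset.trans hX)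
      (hJY.trans (diff_subset.trans diff_subset))
    have hsub : M.E \ insert e I ⊆ M.closure ((X \ I) ∪ J) := by
      intro t ht
      by_cases htX : t ∈ X
      · exact M.subset_closure _ hS'E (Or.inl ⟨htX, fun h => ht.2 (mem_insert_of_mem _ h)⟩)
      · have htY : t ∈ Y := ⟨⟨ht.1, htX⟩, fun h => ht.2 (h ▸ mem_insert _ _)⟩
        have : t ∈ M.closure J := by
          rw [hJ.closure_eq_closure]
          exact M.subset_closure _ (diff_subset.trans diff_subset) htY
        exact Matroid.closure_subset_closure M subset_union_right this
    have hS'sp : M.Spanning ((X \ I) ∪ J) := by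
      rw [Matroid.spanning_iff_ground_subset_closure hS'E]
      calc M.E = M.closure (M.E \ insert e I) := hsp.closure_eq.symm
        _ ⊆ M.closure (M.closure ((X \ I) ∪ J)) := Matroid.closure_subset_closure M hsub
        _ = M.closure ((X \ I) ∪ J) := by rw [Matroid.closure_closure]
    -- K : basis of S' containing J, a base
    obtain ⟨K, hK, hJK⟩ := hJind.subset_isBasis_of_subset subset_union_right hS'E
    have hKbase : M.IsBase K := by
      rw [Matroid.isBase_iff_indep_closure_eq]
      exact ⟨hK.indep, by rw [hK.closure_eq_closure, hS'sp.closure_eq]⟩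
    have heK : e ∉ K := fun h => (hK.subset h).elim (fun h' => heX h'.1) heJ
    have hdepK : M.Dep (insert e K) :=
      hK.indep.insert_dep_iff.mpr ⟨by rw [hKbase.closure_eq]; exact he, heK⟩
    -- K' : basis of insert e K containing insert e J, a base
    obtain ⟨K', hK', hJK'⟩ := heJind.subset_isBasis_of_subset
      (insert_subset_insert hJK) (insert_subset he (hK.subset.trans hS'E))
    have hK'base : M.IsBase K' := by
      rw [Matroid.isBase_iff_indep_closure_eq]
      refine ⟨hK'.indep, ?_⟩
      rw [hK'.closure_eq_closure]
      exact subset_antisymm (M.closure_subset_ground _)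
        (by rw [← hKbase.closure_eq]; exact Matroid.closure_subset_closure M (subset_insert _ _))
    -- pick x ∈ insert e K \ K'
    have hne : K' ≠ insert e K := fun h => hdepK.not_indep (h ▸ hK'.indep)
    obtain ⟨x, hxK, hxK'⟩ : ∃ x, x ∈ insert e K ∧ x ∉ K' := by
      by_contra h
      push_neg at h
      exact hne (subset_antisymm hK'.subset h)
    have hxe : x ≠ e := fun h => hxK' (h ▸ hJK' (mem_insert _ _))
    have hxKmem : x ∈ K := (mem_insert_iff.mp hxK).resolve_left hxe
    have hxJ : x ∉ J := fun h => hxK' (hJK' (mem_insert_of_mem _ h))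
    have hxXI : x ∈ X \ I := (hK.subset hxKmem).resolve_right hxJ
    -- K' avoids insert x I, so E \ insert x I is spanning
    have hK'sub : K' ⊆ M.E \ insert x I := by
      intro y hy
      refine ⟨hK'.indep.subset_ground hy, ?_⟩
      intro hmem
      rcases mem_insert_iff.mp hmem with h | h
      · exact hxK' (h ▸ hy)
      · rcases mem_insert_iff.mp (hK'.subset hy) with h' | h'
        · exact heI (h' ▸ h)
        · rcases hK.subset h' with h'' | h''
          · exact h''.2 h
          · exact (hJY h'').1.2 (hIX h)
    have hspx : M.Spanning (M.E \ insert x I) :=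
      hK'base.spanning.superset hK'sub diff_subset
    have hcox : M✶.Indep (insert x I) := Matroid.coindep_def.mp
      ((Matroid.coindep_iff_compl_spanning (insert_subset (hX hxXI.1) hIE)).mpr hspx)
    have hxcl : x ∈ M✶.closure I := hI.subset_closure hxXI.1
    exact (hIindep.insert_dep_iff.mpr ⟨hxcl, hxXI.2⟩).not_indep hcox

/-- for a flat `F` of a matroid `M` on ground set `E`, the closure of
`E \ F` in the dual matroid `M✶` is the complement `E \ Z(F)`. -/
theorem dual_closure_compl_eq_compl_cyclicPart {α : Type*} (M : Matroid α) (F : Set α)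
    (hF : M.IsFlat F) :
    M✶.closure (M.E \ F) = M.E \ cyclicPart M F := by
  have hFE : F ⊆ M.E := hF.subset_ground
  have hZF : cyclicPart M F ⊆ F := sUnion_subset (fun C hC => hC.2)
  have hdd : M.E \ (M.E \ F) = F := diff_diff_cancel_left hFE
  ext e
  constructor
  · intro h
    have heE : e ∈ M.E := by
      have := M✶.closure_subset_ground (M.E \ F) h
      rwa [Matroid.dual_ground] at this
    refine ⟨heE, fun heZ => ?_⟩
    obtain ⟨C, ⟨hC, hCF⟩, heC⟩ := heZ
    have heF : e ∈ F := hCF heC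
    have hkey := (mem_dual_closure_iff (X := M.E \ F) diff_subset heE
      (fun h' => h'.2 heF)).mp h
    rw [hdd] at hkey
    exact hkey (Matroid.closure_subset_closure M
      (diff_subset_diff_left hCF) (hC.mem_closure_diff heC))
  · rintro ⟨heE, heZ⟩
    by_cases heF : e ∈ F
    · rw [mem_dual_closure_iff (X := M.E \ F) diff_subset heE (fun h' => h'.2 heF), hdd]
      intro hecl
      obtain ⟨J, hJ⟩ := M.exists_isBasis (F \ {e}) (diff_subset.trans hFE)
      have heJcl : e ∈ M.closure J := by rwa [hJ.closure_eq_closure]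
      have heJ : e ∉ J := fun h => (hJ.subset h).2 rfl
      obtain ⟨C, hC, heC, hCsub⟩ := exists_circuit_of_mem_closure hJ.indep heJ heJcl
      exact heZ ⟨C, ⟨hC, hCsub.trans (insert_subset heF (hJ.subset.trans diff_subset))⟩, heC⟩
    · exact M✶.subset_closure (M.E \ F) (by rw [Matroid.dual_ground]; exact diff_subset) ⟨heE, heF⟩
end

section
/- With W a realization of a matroid M and 𝔞 its ideal of pairs, if F is a cyclic flat of M, then the primary component of 𝔞 corresponding to the minimal prime 𝔭 = 𝔭_{F,F^∁} is 𝔭 itself; equivalently, 𝔞·S_𝔭 = 𝔭·S_𝔭 and 𝔭S_𝔭 ∩ S = 𝔭. -/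
open MvPolynomial

lemma aux_single_of_degree_one {n : ℕ} {v : Fin n →₀ ℕ} (hv : Finsupp.degree v = 1) :
    ∃ j, v = Finsupp.single j 1 := by
  have hv0 : v ≠ 0 := by rintro rfl; simp [map_zero] at hv
  obtain ⟨j, hj⟩ := Finsupp.ne_iff.mp hv0
  simp only [Finsupp.coe_zero, Pi.zero_apply] at hj
  refine ⟨j, ?_⟩
  have hle := Finsupp.le_degree j v
  have hvj : v j = 1 := le_antisymm (hv ▸ hle) (Nat.one_le_iff_ne_zero.mpr hj)
  ext i
  rcases eq_or_ne i j with rfl | hij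
  · simp [hvj]
  · simp only [Finsupp.single_apply, if_neg (Ne.symm hij)]
    by_contra hi
    have hi1 : 1 ≤ v i := Nat.one_le_iff_ne_zero.mpr hi
    have : 2 ≤ Finsupp.degree v := by
      have hsub : ({i, j} : Finset (Fin n)) ⊆ v.support := by
        intro x hx
        simp only [Finset.mem_insert, Finset.mem_singleton] at hx
        rcases hx with rfl | rfl <;> simp [Finsupp.mem_support_iff, hi, hj]
      calc 2 ≤ ∑ x ∈ ({i, j} : Finset (Fin n)), v x := by
                rw [Finset.sum_insert (by simp [hij]), Finset.sum_singleton]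
                omega
        _ ≤ _ := Finset.sum_le_sum_of_subset hsub
    omega

lemma aux_mem_span_X {k : Type} [Field k] {n : ℕ} {p : MvPolynomial (Fin n) k}
    (hp : p.IsHomogeneous 1) :
    p ∈ Submodule.span k (Set.range (X : Fin n → MvPolynomial (Fin n) k)) := by
  rw [p.as_sum]
  refine Submodule.sum_mem _ fun v hv => ?_
  have hd : Finsupp.degree v = 1 := by
    have := hp (MvPolynomial.mem_support_iff.mp hv)
    rw [Finsupp.degree_eq_weight_one (R := ℕ)]; exact this
  obtain ⟨j, rfl⟩ := aux_single_of_degree_one hd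
  have : (monomial (Finsupp.single j 1)) (coeff (Finsupp.single j 1) p)
      = (coeff (Finsupp.single j 1) p) • X j := by
    rw [smul_eq_C_mul, C_mul_X_eq_monomial]
  rw [this]
  exact Submodule.smul_mem _ _ (Submodule.subset_span ⟨j, rfl⟩)


attribute [local instance] MvPolynomial.gradedAlgebra

lemma aux_deg1_span {k : Type} [Field k] {n : ℕ} {T : Set (MvPolynomial (Fin n) k)}
    (hT : ∀ t ∈ T, t.IsHomogeneous 1) {p : MvPolynomial (Fin n) k}
    (hp : p.IsHomogeneous 1) (h : p ∈ Ideal.span T) : p ∈ Submodule.span k T := by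
  classical
  set 𝒜 := homogeneousSubmodule (Fin n) k with h𝒜
  rw [Ideal.span, Submodule.mem_span_set] at h
  obtain ⟨c, hsupp, hsum⟩ := h
  have hdec : p = ∑ t ∈ c.support, ((DirectSum.decompose 𝒜 (c t) 0 : MvPolynomial (Fin n) k) * t) := by
    have h1 : (DirectSum.decompose 𝒜 p 1 : MvPolynomial (Fin n) k) = p :=
      DirectSum.decompose_of_mem_same 𝒜 (by exact hp)
    rw [← h1, ← hsum]
    have : (c.sum fun i r => r • i) = ∑ t ∈ c.support, c t * t := by
      rw [Finsupp.sum]; simp [smul_eq_mul]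
    rw [this]
    rw [DirectSum.decompose_sum, DFinsupp.finset_sum_apply, AddSubmonoidClass.coe_finset_sum]
    refine Finset.sum_congr rfl fun t ht => ?_
    have htT : t ∈ 𝒜 1 := hT t (hsupp ht)
    exact DirectSum.coe_decompose_mul_add_of_right_mem 𝒜 htT (a := c t) (i := 0)
  rw [hdec]
  refine Submodule.sum_mem _ fun t ht => ?_
  obtain ⟨r, hr⟩ : ∃ r : k, (DirectSum.decompose 𝒜 (c t) 0 : MvPolynomial (Fin n) k) = C r := by
    have h0 : (DirectSum.decompose 𝒜 (c t) 0 : MvPolynomial (Fin n) k) ∈ 𝒜 0 :=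
      (DirectSum.decompose 𝒜 (c t) 0).2
    refine ⟨coeff 0 ((DirectSum.decompose 𝒜 (c t) 0 : MvPolynomial (Fin n) k)), ?_⟩
    set q : MvPolynomial (Fin n) k := (DirectSum.decompose 𝒜 (c t) 0 : MvPolynomial (Fin n) k)
    have hq : q.IsHomogeneous 0 := h0
    ext d
    rw [coeff_C]
    split_ifs with hd
    · subst hd; rfl
    · by_contra hne
      refine hd ((Finsupp.degree_eq_zero_iff d).mp ?_).symm
      have := hq hne
      rw [Finsupp.degree_eq_weight_one]
      exact this
  rw [hr, ← smul_eq_C_mul]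
  exact Submodule.smul_mem _ _ (Submodule.subset_span (hsupp ht))


variable {k : Type} [Field k] {V : Type} [AddCommGroup V] [Module k V] {n : ℕ}

lemma aux_injOn {f : Fin n → V} {J : Set (Fin n)}
    (hJ : LinearIndependent k (fun j : J => f j)) : Set.InjOn f J := by
  intro a ha b hb hab
  have : (⟨a, ha⟩ : {y // y ∈ J}) = ⟨b, hb⟩ := hJ.injective (show f ((⟨a, ha⟩ : {y // y ∈ J}) : Fin n) = f ((⟨b, hb⟩ : {y // y ∈ J}) : Fin n) from hab)
  exact congrArg Subtype.val this

lemma aux_insert_iff {f : Fin n → V} {J : Set (Fin n)} {x : Fin n} (hx : x ∉ J)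
    (hJ : LinearIndependent k (fun j : J => f j)) :
    LinearIndependent k (fun j : ↥(insert x J) => f j) ↔
      f x ∉ Submodule.span k (f '' J) := by
  have hinjJ : Set.InjOn f J := aux_injOn hJ
  have hsetJ : LinearIndependent k ((↑) : (f '' J) → V) := (linearIndepOn_iff_image hinjJ).mp hJ
  constructor
  · intro h hmem
    have hinj : Set.InjOn f (insert x J) := aux_injOn h
    have hfx : f x ∉ f '' J := by
      rintro ⟨a, haJ, hfa⟩
      exact hx (hinj (Set.mem_insert _ _) (Set.subset_insert _ _ haJ) hfa.symm ▸ haJ)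
    have hset : LinearIndependent k ((↑) : (f '' (insert x J)) → V) :=
      (linearIndepOn_iff_image hinj).mp h
    rw [Set.image_insert_eq] at hset
    exact ((linearIndepOn_id_insert hfx).mp hset).2 hmem
  · intro hns
    have hfx : f x ∉ f '' J := fun hm => hns (Submodule.subset_span hm)
    have hinj : Set.InjOn f (insert x J) := by
      intro a ha b hb hab
      rcases ha with rfl | ha <;> rcases hb with rfl | hb
      · rfl
      · exact absurd (hab ▸ Set.mem_image_of_mem f hb) hfx
      · exact absurd (hab ▸ Set.mem_image_of_mem f ha) hfx
      · exact hinjJ ha hb hab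
    have hset : LinearIndependent k ((↑) : (f '' (insert x J)) → V) := by
      rw [Set.image_insert_eq]
      exact (linearIndepOn_id_insert hfx).mpr ⟨hsetJ, hns⟩
    exact (linearIndepOn_iff_image hinj).mpr hset

variable {M : Matroid (Fin n)}

lemma aux_dep_iff (hE : M.E = Set.univ) {X : Set (Fin n)} : M.Dep X ↔ ¬ M.Indep X := by
  rw [Matroid.Dep, hE]; simp

lemma aux_span_of_closure (hE : M.E = Set.univ) {f : Fin n → V}
    (hM : ∀ I : Set (Fin n), M.Indep I ↔ LinearIndependent k (fun i : I => f i))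
    {J : Set (Fin n)} (hJ : M.Indep J) {x : Fin n} (hx : x ∈ M.closure J) :
    f x ∈ Submodule.span k (f '' J) := by
  by_cases hxJ : x ∈ J
  · exact Submodule.subset_span (Set.mem_image_of_mem f hxJ)
  · have hdep : M.Dep (insert x J) := (hJ.insert_dep_iff).mpr ⟨hx, hxJ⟩
    have hni : ¬ LinearIndependent k (fun j : ↥(insert x J) => f j) :=
      fun h => ((aux_dep_iff hE).mp hdep) ((hM _).mpr h)
    by_contra hns
    exact hni ((aux_insert_iff hxJ ((hM J).mp hJ)).mpr hns)

lemma aux_closure_of_span (hE : M.E = Set.univ) {f : Fin n → V}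
    (hM : ∀ I : Set (Fin n), M.Indep I ↔ LinearIndependent k (fun i : I => f i))
    {J : Set (Fin n)} (hJ : M.Indep J) {x : Fin n}
    (hx : f x ∈ Submodule.span k (f '' J)) : x ∈ M.closure J := by
  by_cases hxJ : x ∈ J
  · exact M.mem_closure_of_mem hxJ (by rw [hE]; exact Set.subset_univ _)
  · have hdep : M.Dep (insert x J) := by
      rw [aux_dep_iff hE]
      intro hind
      exact ((aux_insert_iff hxJ ((hM J).mp hJ)).mp ((hM _).mp hind)) hx
    exact ((hJ.insert_dep_iff).mp hdep).1

lemma aux_mem_closure_of_span (hE : M.E = Set.univ) {f : Fin n → V}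
    (hM : ∀ I : Set (Fin n), M.Indep I ↔ LinearIndependent k (fun i : I => f i))
    {X : Set (Fin n)} {e : Fin n} (h : f e ∈ Submodule.span k (f '' X)) :
    e ∈ M.closure X := by
  obtain ⟨J, hJ⟩ := M.exists_isBasis X (by rw [hE]; exact Set.subset_univ _)
  have hle : Submodule.span k (f '' X) ≤ Submodule.span k (f '' J) := by
    rw [Submodule.span_le]
    rintro - ⟨x, hxX, rfl⟩
    exact aux_span_of_closure hE hM hJ.indep (hJ.subset_closure hxX)
  rw [← hJ.closure_eq_closure]
  exact aux_closure_of_span hE hM hJ.indep (hle h)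

lemma aux_span_base (hE : M.E = Set.univ) {f : Fin n → V}
    (hM : ∀ I : Set (Fin n), M.Indep I ↔ LinearIndependent k (fun i : I => f i))
    {B : Set (Fin n)} (hB : M.IsBase B) :
    Submodule.span k (f '' B) = Submodule.span k (Set.range f) := by
  refine le_antisymm (Submodule.span_mono (Set.image_subset_range f B)) ?_
  rw [Submodule.span_le]
  rintro - ⟨i, rfl⟩
  exact aux_span_of_closure hE hM hB.indep
    (by rw [hB.closure_eq, hE]; exact Set.mem_univ i)

lemma aux_finrank_span (hE : M.E = Set.univ) {f : Fin n → V}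
    (hM : ∀ I : Set (Fin n), M.Indep I ↔ LinearIndependent k (fun i : I => f i))
    {B : Set (Fin n)} (hB : M.IsBase B) :
    Module.finrank k (Submodule.span k (Set.range f)) = B.ncard := by
  classical
  have hind : LinearIndependent k (fun i : B => f i) := (hM B).mp hB.indep
  have hinj : Set.InjOn f B := aux_injOn hind
  have hset : LinearIndependent k ((↑) : (f '' B) → V) := (linearIndepOn_iff_image hinj).mp hind
  haveI : Fintype ↥(f '' B) := ((Set.toFinite B).image f).fintype
  rw [← aux_span_base hE hM hB, finrank_span_set_eq_card hset,
    ← Set.ncard_eq_toFinset_card', Set.ncard_image_of_injOn hinj]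

open MvPolynomial in
lemma aux_inf_bot {k : Type} [Field k] {n : ℕ} {M : Matroid (Fin n)} (hE : M.E = Set.univ)
    {f g : Fin n → MvPolynomial (Fin n) k}
    (hf1 : ∀ i, (f i).IsHomogeneous 1) (hg1 : ∀ i, (g i).IsHomogeneous 1)
    (hM : ∀ I : Set (Fin n), M.Indep I ↔ LinearIndependent k (fun i : I => f i))
    (hMd : ∀ I : Set (Fin n), M✶.Indep I ↔ LinearIndependent k (fun i : I => g i))
    (hspan : ∀ j : Fin n, (X j : MvPolynomial (Fin n) k)
      ∈ Submodule.span k (Set.range f ∪ Set.range g)) :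
    Submodule.span k (Set.range f) ⊓ Submodule.span k (Set.range g) = ⊥ := by
  classical
  set A := Submodule.span k (Set.range f) with hA
  set B := Submodule.span k (Set.range g) with hB
  haveI : FiniteDimensional k A := FiniteDimensional.span_of_finite k (Set.finite_range f)
  haveI : FiniteDimensional k B := FiniteDimensional.span_of_finite k (Set.finite_range g)
  obtain ⟨B₀, hB₀⟩ := M.exists_isBase
  have hEd : M✶.E = Set.univ := by rw [Matroid.dual_ground]; exact hE
  have hB₀c : M✶.IsBase B₀ᶜ := by
    have := hB₀.compl_isBase_dual
    rwa [hE, ← Set.compl_eq_univ_diff] at this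
  have hrkA : Module.finrank k A = B₀.ncard := aux_finrank_span hE hM hB₀
  have hrkB : Module.finrank k B = B₀ᶜ.ncard := aux_finrank_span hEd hMd hB₀c
  have hsup : A ⊔ B = Submodule.span k (Set.range (X : Fin n → MvPolynomial (Fin n) k)) := by
    apply le_antisymm
    · rw [← Submodule.span_union, Submodule.span_le]
      rintro - (⟨i, rfl⟩ | ⟨i, rfl⟩)
      · exact aux_mem_span_X (hf1 i)
      · exact aux_mem_span_X (hg1 i)
    · rw [Submodule.span_le]
      rintro - ⟨j, rfl⟩
      rw [← Submodule.span_union]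
      exact hspan j
  have hrksup : Module.finrank k ↥(A ⊔ B) = n := by
    rw [hsup, finrank_span_eq_card (MvPolynomial.linearIndependent_X (Fin n) k), Fintype.card_fin]
  have hdim := Submodule.finrank_sup_add_finrank_inf_eq A B
  have hcard : B₀.ncard + B₀ᶜ.ncard = n := by
    rw [Set.ncard_add_ncard_compl, Nat.card_eq_fintype_card, Fintype.card_fin]
  haveI : FiniteDimensional k ↥(A ⊓ B) := Submodule.finiteDimensional_of_le inf_le_left
  have hz : Module.finrank k ↥(A ⊓ B) = 0 := by omega
  exact Submodule.finrank_eq_zero.mp hz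



lemma aux_not_mem_dual_closure {n : ℕ} {M : Matroid (Fin n)} (hE : M.E = Set.univ)
    {F : Set (Fin n)} {i : Fin n} {C : Set (Fin n)} (hC : Minimal M.Dep C)
    (hiC : i ∈ C) (hCF : C ⊆ F) : i ∉ M✶.closure Fᶜ := by
  have hsub : ∀ X : Set (Fin n), X ⊆ M.E := fun X => by rw [hE]; exact Set.subset_univ _
  have hiF : i ∈ F := hCF hiC
  -- C \ {i} is independent
  have hCdiff : M.Indep (C \ {i}) := by
    by_contra hni
    have hdep : M.Dep (C \ {i}) := ⟨hni, hsub _⟩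
    have := hC.2 hdep Set.diff_subset
    exact (this hiC).2 rfl
  -- i ∈ closure of C \ {i}
  have hicl : i ∈ M.closure (C \ {i}) := by
    have : M.Dep (insert i (C \ {i})) := by
      rw [Set.insert_diff_singleton, Set.insert_eq_of_mem hiC]
      exact hC.prop
    exact ((hCdiff.insert_dep_iff).mp this).1
  have hicl' : i ∈ M.closure (F \ {i}) :=
    M.closure_subset_closure (Set.diff_subset_diff_left hCF) hicl
  -- basis I of F \ {i}
  obtain ⟨I, hI⟩ := M.exists_isBasis (F \ {i}) (hsub _)
  have hiI : i ∉ I := fun h => (hI.subset h).2 rfl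
  have hicli : i ∈ M.closure I := by rwa [hI.closure_eq_closure]
  -- I is a basis of F
  have hIF : M.IsBasis I F := by
    refine hI.indep.isBasis_of_subset_of_subset_closure
      (hI.subset.trans Set.diff_subset) ?_
    intro x hxF
    rcases eq_or_ne x i with rfl | hx
    · exact hicli
    · exact hI.subset_closure ⟨hxF, hx⟩
  -- extend I to a base B
  obtain ⟨B, hB, hIB⟩ := hI.indep.exists_isBase_superset
  have hiB : i ∉ B := by
    intro hiB
    have hind : M.Indep (insert i I) := hB.indep.subset (Set.insert_subset hiB hIB)
    exact hind.not_dep ((hI.indep.insert_dep_iff).mpr ⟨hicli, hiI⟩)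
  have hBF : M.IsBasis (B ∩ F) F := by
    have : B ∩ F = I := (hIF.eq_of_subset_indep (hB.indep.inter_right F)
      (Set.subset_inter hIB hIF.subset) Set.inter_subset_right).symm
    rwa [this]
  have hdual := hB.compl_inter_isBasis_of_inter_isBasis hBF
  rw [hE, ← Set.compl_eq_univ_diff, ← Set.compl_eq_univ_diff] at hdual
  -- hdual : M✶.Basis (Bᶜ ∩ Fᶜ) Fᶜ
  intro hmem
  have hmem' : i ∈ M✶.closure (Bᶜ ∩ Fᶜ) := by rwa [hdual.closure_eq_closure]
  have hiJ : i ∉ Bᶜ ∩ Fᶜ := fun h => h.2 hiF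
  have hdep : M✶.Dep (insert i (Bᶜ ∩ Fᶜ)) :=
    (hdual.indep.insert_dep_iff).mpr ⟨hmem', hiJ⟩
  have hBc : M✶.IsBase Bᶜ := by
    have := hB.compl_isBase_dual
    rwa [hE, ← Set.compl_eq_univ_diff] at this
  have hind : M✶.Indep (insert i (Bᶜ ∩ Fᶜ)) :=
    hBc.indep.subset (Set.insert_subset hiB Set.inter_subset_left)
  exact hind.not_dep hdep

/-- A cyclic flat: a flat which is a union of circuits. -/
def IsCyclicFlat {α : Type*} (M : Matroid α) (F : Set α) : Prop :=
  M.IsFlat F ∧ ∃ 𝒞 : Set (Set α), (∀ C ∈ 𝒞, MatroidCircuit M C) ∧ F = ⋃₀ 𝒞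

/-- With `W` a realization of `M` and `𝔞` its ideal of pairs, if `F` is a
cyclic flat of `M`, then the primary component of `𝔞` corresponding to the minimal prime
`𝔭 = 𝔭_{F,F^∁}` is `𝔭` itself: `𝔞 · S_𝔭 = 𝔭 · S_𝔭` and `𝔭 S_𝔭 ∩ S = 𝔭`. -/
theorem primary_component_of_cyclicFlat
    (k : Type) [Field k] (n r : ℕ)
    (M : Matroid (Fin n)) (hE : M.E = Set.univ)
    (hloopless : ∀ i : Fin n, M.Indep {i})
    (f g : Fin n → MvPolynomial (Fin n) k)
    (hf1 : ∀ i, (f i).IsHomogeneous 1) (hg1 : ∀ i, (g i).IsHomogeneous 1)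
    -- `f` realizes `M` and `g` realizes the dual matroid `M✶`:
    (hM : ∀ I : Set (Fin n), M.Indep I ↔ LinearIndependent k (fun i : I => f i))
    (hMd : ∀ I : Set (Fin n), M✶.Indep I ↔ LinearIndependent k (fun i : I => g i))
    -- the `f i` and `g i` together span the space of linear forms, i.e. `S = k[W ⊕ W^⊥]`:
    (hspan : ∀ j : Fin n, (X j : MvPolynomial (Fin n) k)
      ∈ Submodule.span k (Set.range f ∪ Set.range g))
    -- the ideal of pairs:
    (𝔞 : Ideal (MvPolynomial (Fin n) k))
    (h𝔞 : 𝔞 = Ideal.span (Set.range fun i => f i * g i)) :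
    ∀ F : Set (Fin n), IsCyclicFlat M F →
      ∀ hp : (Ideal.span (f '' F ∪ g '' Fᶜ)).IsPrime,
        haveI := hp
        Ideal.map (algebraMap (MvPolynomial (Fin n) k)
            (Localization.AtPrime (Ideal.span (f '' F ∪ g '' Fᶜ)))) 𝔞
          = Ideal.map (algebraMap (MvPolynomial (Fin n) k)
            (Localization.AtPrime (Ideal.span (f '' F ∪ g '' Fᶜ))))
            (Ideal.span (f '' F ∪ g '' Fᶜ)) ∧
        Ideal.comap (algebraMap (MvPolynomial (Fin n) k)
            (Localization.AtPrime (Ideal.span (f '' F ∪ g '' Fᶜ))))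
          (Ideal.map (algebraMap (MvPolynomial (Fin n) k)
            (Localization.AtPrime (Ideal.span (f '' F ∪ g '' Fᶜ))))
            (Ideal.span (f '' F ∪ g '' Fᶜ)))
          = Ideal.span (f '' F ∪ g '' Fᶜ) := by
  intro F hF hp
  haveI := hp
  obtain ⟨hflat, 𝒞, h𝒞, hFU⟩ := hF
  set T : Set (MvPolynomial (Fin n) k) := f '' F ∪ g '' Fᶜ with hT
  set 𝔭 : Ideal (MvPolynomial (Fin n) k) := Ideal.span T with h𝔭
  have hEd : M✶.E = Set.univ := by rw [Matroid.dual_ground]; exact hE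
  have hThom : ∀ t ∈ T, t.IsHomogeneous 1 := by
    rintro t (⟨i, -, rfl⟩ | ⟨i, -, rfl⟩)
    · exact hf1 i
    · exact hg1 i
  have hinf := aux_inf_bot hE hf1 hg1 hM hMd hspan
  -- membership in the linear span
  have hspanT : ∀ p : MvPolynomial (Fin n) k, p.IsHomogeneous 1 → p ∈ 𝔭 →
      p ∈ Submodule.span k (f '' F) ⊔ Submodule.span k (g '' Fᶜ) := by
    intro p hph hp𝔭
    have := aux_deg1_span hThom hph hp𝔭
    rwa [hT, Submodule.span_union] at this
  -- key nonmembership facts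
  have hK2 : ∀ i : Fin n, i ∉ F → f i ∉ 𝔭 := by
    intro i hiF hmem
    obtain ⟨a, ha, b, hb, hab⟩ := Submodule.mem_sup.mp (hspanT _ (hf1 i) hmem)
    have hbA : b ∈ Submodule.span k (Set.range f) := by
      have hfi : f i ∈ Submodule.span k (Set.range f) :=
        Submodule.subset_span ⟨i, rfl⟩
      have haA : a ∈ Submodule.span k (Set.range f) :=
        Submodule.span_mono (Set.image_subset_range f F) ha
      have : b = f i - a := by rw [← hab]; ring
      rw [this]; exact Submodule.sub_mem _ hfi haA
    have hbB : b ∈ Submodule.span k (Set.range g) :=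
      Submodule.span_mono (Set.image_subset_range g Fᶜ) hb
    have hb0 : b = 0 := by
      have : b ∈ (⊥ : Submodule k (MvPolynomial (Fin n) k)) := hinf ▸ Submodule.mem_inf.mpr ⟨hbA, hbB⟩
      simpa using this
    have hfi : f i ∈ Submodule.span k (f '' F) := by
      rw [← hab, hb0, add_zero]; exact ha
    have : i ∈ M.closure F := aux_mem_closure_of_span hE hM hfi
    rw [hflat.closure] at this
    exact hiF this
  have hK1 : ∀ i : Fin n, i ∈ F → g i ∉ 𝔭 := by
    intro i hiF hmem
    obtain ⟨a, ha, b, hb, hab⟩ := Submodule.mem_sup.mp (hspanT _ (hg1 i) hmem)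
    have haB : a ∈ Submodule.span k (Set.range g) := by
      have hgi : g i ∈ Submodule.span k (Set.range g) :=
        Submodule.subset_span ⟨i, rfl⟩
      have hbB : b ∈ Submodule.span k (Set.range g) :=
        Submodule.span_mono (Set.image_subset_range g Fᶜ) hb
      have : a = g i - b := by rw [← hab]; ring
      rw [this]; exact Submodule.sub_mem _ hgi hbB
    have haA : a ∈ Submodule.span k (Set.range f) :=
      Submodule.span_mono (Set.image_subset_range f F) ha
    have ha0 : a = 0 := by
      have : a ∈ (⊥ : Submodule k (MvPolynomial (Fin n) k)) := hinf ▸ Submodule.mem_inf.mpr ⟨haA, haB⟩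
      simpa using this
    have hgi : g i ∈ Submodule.span k (g '' Fᶜ) := by
      rw [← hab, ha0, zero_add]; exact hb
    have hmemd : i ∈ M✶.closure Fᶜ := aux_mem_closure_of_span hEd hMd hgi
    obtain ⟨C, hC𝒞, hiC⟩ : ∃ C ∈ 𝒞, i ∈ C := by
      have := hFU ▸ hiF
      exact Set.mem_sUnion.mp this
    have hCF : C ⊆ F := hFU ▸ Set.subset_sUnion_of_mem hC𝒞
    exact aux_not_mem_dual_closure hE (h𝒞 C hC𝒞) hiC hCF hmemd
  -- 𝔞 ≤ 𝔭
  have h𝔞𝔭 : 𝔞 ≤ 𝔭 := by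
    rw [h𝔞, Ideal.span_le]
    rintro - ⟨i, rfl⟩
    by_cases hiF : i ∈ F
    · exact Ideal.mul_mem_right _ _ (Ideal.subset_span (Or.inl ⟨i, hiF, rfl⟩))
    · exact Ideal.mul_mem_left _ _ (Ideal.subset_span (Or.inr ⟨i, hiF, rfl⟩))
  set φ := algebraMap (MvPolynomial (Fin n) k) (Localization.AtPrime 𝔭) with hφ
  have hmain : Ideal.map φ 𝔞 = Ideal.map φ 𝔭 := by
    refine le_antisymm (Ideal.map_mono h𝔞𝔭) ?_
    refine Ideal.map_le_iff_le_comap.mpr ?_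
    show Ideal.span T ≤ _
    rw [Ideal.span_le]
    intro t htT
    rw [SetLike.mem_coe, Ideal.mem_comap]
    have key : ∀ x y : MvPolynomial (Fin n) k, x * y ∈ 𝔞 → y ∉ 𝔭 → φ x ∈ Ideal.map φ 𝔞 := by
      intro x y hxy hy
      have hunit : IsUnit (φ y) :=
        IsLocalization.map_units (Localization.AtPrime 𝔭) (⟨y, hy⟩ : 𝔭.primeCompl)
      obtain ⟨u, hu⟩ := hunit
      have hmem : φ (x * y) ∈ Ideal.map φ 𝔞 := Ideal.mem_map_of_mem φ hxy
      have hxeq : φ x = φ (x * y) * ↑u⁻¹ := by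
        rw [map_mul, ← hu, mul_assoc, Units.mul_inv, mul_one]
      rw [hxeq]
      exact Ideal.mul_mem_right _ _ hmem
    rcases htT with ⟨i, hiF, rfl⟩ | ⟨i, hiF, rfl⟩
    · exact key (f i) (g i) (h𝔞 ▸ Ideal.subset_span ⟨i, rfl⟩) (hK1 i hiF)
    · refine key (g i) (f i) ?_ (hK2 i hiF)
      have : g i * f i = f i * g i := mul_comm _ _
      rw [this]
      exact h𝔞 ▸ Ideal.subset_span ⟨i, rfl⟩
  refine ⟨hmain, ?_⟩
  rw [Localization.AtPrime.map_eq_maximalIdeal]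
  exact Localization.AtPrime.under_maximalIdeal ..
end

section
/- Let M = U_{r,n} be the uniform matroid of rank r on [n], realized by W ⊆ k^n with coordinate forms f₁,…,fₙ on W and g₁,…,gₙ on W^⊥, and let 𝔞 = (f₁g₁,…,fₙgₙ). Then for all indices i₁,…,i_r, a ∈ [n] (not necessarily distinct), the product g_{i₁}⋯g_{i_r}·f_a lies in 𝔞. -/
/-- Let `M = U_{r,n}` be the uniform matroid of rank `r` on `[n]`,
realized by `W ⊆ k^n` with coordinate linear forms `f 1, …, f n` on `W` and
`g 1, …, g n` on `W^⊥` (realizing the dual matroid), and let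
`𝔞 = (f 1 * g 1, …, f n * g n)` in `S = k[W ⊕ W^⊥]`.  Then for all indices
`i 1, …, i r, a ∈ [n]` (not necessarily distinct), `g (i 1) ⋯ g (i r) * f a ∈ 𝔞`. -/
theorem uniform_product_mem_idealOfPairs
    (k : Type) [Field k] (S : Type) [CommRing S] [Algebra k S]
    (n r : ℕ)
    (M : Matroid (Fin n)) (hE : M.E = Set.univ)
    -- `M` is the uniform matroid `U_{r,n}`:
    (hU : ∀ I : Set (Fin n), M.Indep I ↔ I.ncard ≤ r)
    (f g : Fin n → S)
    -- `f` realizes `M` and `g` realizes the dual matroid `M✶`: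
    (hM : ∀ I : Set (Fin n), M.Indep I ↔ LinearIndependent k (fun i : I => f i))
    (hMd : ∀ I : Set (Fin n), M✶.Indep I ↔ LinearIndependent k (fun i : I => g i))
    -- the ideal of pairs:
    (𝔞 : Ideal S) (h𝔞 : 𝔞 = Ideal.span (Set.range fun i => f i * g i)) :
    ∀ (idx : Fin r → Fin n) (a : Fin n),
      (∏ j : Fin r, g (idx j)) * f a ∈ 𝔞 := by
  classical
  have hgen : ∀ i, f i * g i ∈ 𝔞 := by
    intro i; rw [h𝔞]; exact Ideal.subset_span ⟨i, rfl⟩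
  have huniv : (Set.univ : Set (Fin n)).ncard = n := by
    rw [Set.ncard_univ, Nat.card_eq_fintype_card, Fintype.card_fin]
  have hle_n : ∀ T : Set (Fin n), T.ncard ≤ n := by
    intro T
    have := Set.ncard_le_ncard (Set.subset_univ T) Set.finite_univ
    omega
  -- every base of M has cardinality `min r n`
  have hBaseCard : ∀ B : Set (Fin n), M.IsBase B → B.ncard = min r n := by
    intro B hB
    rw [Matroid.isBase_iff_maximal_indep] at hB
    have h1 : B.ncard ≤ r := (hU B).1 hB.1
    have h2 : B.ncard ≤ n := hle_n B
    rcases lt_or_ge B.ncard (min r n) with hlt | hge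
    · obtain ⟨B', hBB', hB'u, hB'card⟩ :=
        Set.exists_subsuperset_card_eq (Set.subset_univ B) hlt.le
          (by rw [huniv]; exact min_le_right r n)
      have hsub : B' ⊆ B := hB.2 ((hU B').2 (by omega)) hBB'
      have := Set.ncard_le_ncard hsub (Set.toFinite B)
      omega
    · omega
  -- every `min r n`-set is a base of M
  have hBaseOfCard : ∀ B : Set (Fin n), B.ncard = min r n → M.IsBase B := by
    intro B hB
    rw [Matroid.isBase_iff_maximal_indep]
    refine ⟨(hU B).2 (by omega), ?_⟩
    intro I hI hBI
    have h1 : I.ncard ≤ r := (hU I).1 hI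
    have h2 : I.ncard ≤ n := hle_n I
    exact (Set.eq_of_subset_of_ncard_le hBI (by omega) (Set.toFinite I)).symm.subset
  -- dual independence from cardinality
  have hdualIndep : ∀ A : Set (Fin n), A.ncard + min r n ≤ n → M✶.Indep A := by
    intro A hA
    rw [Matroid.dual_indep_iff_exists']
    refine ⟨by rw [hE]; exact Set.subset_univ A, ?_⟩
    have hdiff : (Set.univ \ A).ncard = n - A.ncard := by
      rw [Set.ncard_diff (Set.subset_univ A), huniv]
    obtain ⟨B, hB1, hB2⟩ := Set.exists_subset_card_eq
      (s := (Set.univ \ A : Set (Fin n))) (n := min r n) (by omega)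
    refine ⟨B, hBaseOfCard B hB2, ?_⟩
    exact Set.disjoint_right.mpr (fun x hx => fun hxA => (hB1 hx).2 hxA)
  -- dual dependence from cardinality
  have hdualDep : ∀ A : Set (Fin n), n < A.ncard + min r n → ¬ M✶.Indep A := by
    intro A hA hind
    rw [Matroid.dual_indep_iff_exists'] at hind
    obtain ⟨-, B, hB, hdisj⟩ := hind
    have hBcard := hBaseCard B hB
    have hun : (A ∪ B).ncard = A.ncard + B.ncard :=
      Set.ncard_union_eq hdisj (Set.toFinite A) (Set.toFinite B)
    have := hle_n (A ∪ B)
    omega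
  -- span lemmas
  have hfspan : ∀ (T : Set (Fin n)) (a : Fin n), a ∉ T → M.Indep T →
      ¬ M.Indep (insert a T) → f a ∈ Submodule.span k (f '' T) := by
    intro T a haT hT hnT
    by_contra hmem
    exact hnT ((hM _).2 ((linearIndepOn_insert haT).2 ⟨(hM T).1 hT, hmem⟩))
  have hgspan : ∀ (T : Set (Fin n)) (a : Fin n), a ∉ T → M✶.Indep T →
      ¬ M✶.Indep (insert a T) → g a ∈ Submodule.span k (g '' T) := by
    intro T a haT hT hnT
    by_contra hmem
    exact hnT ((hMd _).2 ((linearIndepOn_insert haT).2 ⟨(hMd T).1 hT, hmem⟩))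
  -- the easy case: `a` occurs among the indices
  have case1 : ∀ (idx : Fin r → Fin n) (j₀ : Fin r),
      (∏ j : Fin r, g (idx j)) * f (idx j₀) ∈ 𝔞 := by
    intro idx j₀
    rw [← Finset.mul_prod_erase _ _ (Finset.mem_univ j₀)]
    have : g (idx j₀) * (∏ j ∈ Finset.univ.erase j₀, g (idx j)) * f (idx j₀)
        = (f (idx j₀) * g (idx j₀)) * (∏ j ∈ Finset.univ.erase j₀, g (idx j)) := by ring
    rw [this]
    exact Ideal.mul_mem_right _ _ (hgen _)
  suffices key : ∀ (m : ℕ) (idx : Fin r → Fin n) (a : Fin n),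
      n - (Set.range idx).ncard ≤ m → (∏ j : Fin r, g (idx j)) * f a ∈ 𝔞 by
    intro idx a
    exact key n idx a (by omega)
  intro m
  induction m with
  | zero =>
    intro idx a hm
    have h1 : n ≤ (Set.range idx).ncard := by omega
    have hT : Set.range idx = Set.univ :=
      Set.eq_of_subset_of_ncard_le (Set.subset_univ _) (by omega) (Set.toFinite _)
    have : a ∈ Set.range idx := hT ▸ Set.mem_univ a
    obtain ⟨j₀, rfl⟩ := this
    exact case1 idx j₀
  | succ m ih =>
    intro idx a hm
    by_cases ha : a ∈ Set.range idx
    · obtain ⟨j₀, rfl⟩ := ha; exact case1 idx j₀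
    by_cases hinj : Function.Injective idx
    · have hTcard : (Set.range idx).ncard = r := by
        rw [← Set.image_univ, Set.ncard_image_of_injective _ hinj, Set.ncard_univ,
          Nat.card_eq_fintype_card, Fintype.card_fin]
      have hTind : M.Indep (Set.range idx) := (hU _).2 (le_of_eq hTcard)
      have hdep : ¬ M.Indep (insert a (Set.range idx)) := by
        rw [hU, Set.ncard_insert_of_notMem ha (Set.toFinite _)]
        omega
      have hspan := hfspan _ a ha hTind hdep
      rw [← Set.range_comp] at hspan
      obtain ⟨c, hc⟩ := (Submodule.mem_span_range_iff_exists_fun k).1 hspan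
      rw [← hc, Finset.mul_sum]
      apply Submodule.sum_mem
      intro j _
      have : (∏ j' : Fin r, g (idx j')) * (c j • (f ∘ idx) j)
          = c j • ((∏ j' : Fin r, g (idx j')) * f (idx j)) := by
        rw [mul_smul_comm]; rfl
      rw [this, Algebra.smul_def]
      exact Ideal.mul_mem_left _ _ (case1 idx j)
    · obtain ⟨j₁, j₂, heq, hne⟩ := Function.not_injective_iff.1 hinj
      set T := Set.range idx with hTdef
      have hTle_r : T.ncard ≤ r := by
        have : T.ncard = (idx '' Set.univ).ncard := by rw [Set.image_univ]
        rw [this]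
        have := Set.ncard_image_le (f := idx) (s := Set.univ) Set.finite_univ
        have h2 : (Set.univ : Set (Fin r)).ncard = r := by
          rw [Set.ncard_univ, Nat.card_eq_fintype_card, Fintype.card_fin]
        omega
      have hTle_n : T.ncard ≤ n := hle_n T
      have hdiff : (Set.univ \ T).ncard = n - T.ncard := by
        rw [Set.ncard_diff (Set.subset_univ T), huniv]
      obtain ⟨A, hA_sub, hA_card⟩ := Set.exists_subset_card_eq
        (s := (Set.univ \ T : Set (Fin n))) (n := n - min r n) (by omega)
      have hbT : idx j₁ ∈ T := ⟨j₁, rfl⟩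
      have hbA : idx j₁ ∉ A := fun h => (hA_sub h).2 hbT
      have hminn : min r n ≤ n := min_le_right r n
      have hAind : M✶.Indep A := hdualIndep A (by omega)
      have hAdep : ¬ M✶.Indep (insert (idx j₁) A) := by
        apply hdualDep
        rw [Set.ncard_insert_of_notMem hbA (Set.toFinite _)]
        omega
      have hspan := hgspan A (idx j₁) hbA hAind hAdep
      rw [Set.image_eq_range] at hspan
      obtain ⟨c, hc⟩ := (Submodule.mem_span_range_iff_exists_fun k).1 hspan
      have hprod : ∀ e : Fin n,
          (∏ j : Fin r, g (Function.update idx j₁ e j))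
            = g e * ∏ j ∈ Finset.univ.erase j₁, g (idx j) := by
        intro e
        rw [← Finset.mul_prod_erase _ _ (Finset.mem_univ j₁)]
        congr 1
        · rw [Function.update_self]
        · apply Finset.prod_congr rfl
          intro j hj
          rw [Function.update_of_ne (Finset.ne_of_mem_erase hj)]
      rw [← Finset.mul_prod_erase _ _ (Finset.mem_univ j₁), ← hc,
        Finset.sum_mul, Finset.sum_mul]
      apply Submodule.sum_mem
      intro x _
      have hx_nT : (x : Fin n) ∉ T := (hA_sub x.2).2
      have hstep : (c x • g (x : Fin n)) * (∏ j ∈ Finset.univ.erase j₁, g (idx j)) * f a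
          = c x • ((∏ j : Fin r, g (Function.update idx j₁ (x : Fin n) j)) * f a) := by
        rw [hprod, smul_mul_assoc, smul_mul_assoc, mul_assoc]
      rw [hstep, Algebra.smul_def]
      apply Ideal.mul_mem_left
      apply ih (Function.update idx j₁ (x : Fin n)) a
      have hrange : Set.range (Function.update idx j₁ (x : Fin n))
          = insert (x : Fin n) T := by
        ext y
        constructor
        · rintro ⟨j, rfl⟩
          by_cases h : j = j₁
          · subst h; rw [Function.update_self]; exact Set.mem_insert _ _
          · rw [Function.update_of_ne h]; exact Set.mem_insert_of_mem _ ⟨j, rfl⟩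
        · rintro (rfl | ⟨j, rfl⟩)
          · exact ⟨j₁, Function.update_self _ _ _⟩
          · by_cases h : j = j₁
            · subst h
              exact ⟨j₂, by rw [Function.update_of_ne (Ne.symm hne)]; exact heq.symm⟩
            · exact ⟨j, Function.update_of_ne h _ _⟩
      rw [hrange, Set.ncard_insert_of_notMem hx_nT (Set.toFinite _)]
      omega
end

section
/- Let W be a realization of a matroid M on [n] with coordinate forms f₁,…,fₙ on W and g₁,…,gₙ on W^⊥, and let 𝔞 = (f₁g₁,…,fₙgₙ). If B is a basis of M, then for every a ∈ [n], the element (∏_{i∈B} g_i)·f_a lies in 𝔞. -/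
/-- Let `W` be a realization of a matroid `M` on `[n]` with coordinate
linear forms `f 1, …, f n` on `W` and `g 1, …, g n` on `W^⊥` (realizing the dual
matroid), and let `𝔞 = (f 1 * g 1, …, f n * g n)`.  If `B` is a basis of `M`, then for
every `a ∈ [n]`, the element `(∏_{i ∈ B} g i) * f a` lies in `𝔞`. -/
theorem base_product_mem_idealOfPairs
    (k : Type) [Field k] (S : Type) [CommRing S] [Algebra k S]
    (n : ℕ)
    (M : Matroid (Fin n)) (hE : M.E = Set.univ)
    (f g : Fin n → S)
    -- `f` realizes `M` and `g` realizes the dual matroid `M✶`: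
    (hM : ∀ I : Set (Fin n), M.Indep I ↔ LinearIndependent k (fun i : I => f i))
    (hMd : ∀ I : Set (Fin n), M✶.Indep I ↔ LinearIndependent k (fun i : I => g i))
    -- the ideal of pairs:
    (𝔞 : Ideal S) (h𝔞 : 𝔞 = Ideal.span (Set.range fun i => f i * g i)) :
    ∀ (B : Finset (Fin n)), M.IsBase ↑B →
      ∀ a : Fin n, (∏ i ∈ B, g i) * f a ∈ 𝔞 := by
  intro B hB a
  -- basic membership facts
  have hgen : ∀ i : Fin n, f i * g i ∈ 𝔞 := by
    intro i
    rw [h𝔞]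
    exact Ideal.subset_span ⟨i, rfl⟩
  -- key: for i ∈ B, (∏ j ∈ B, g j) * f i ∈ 𝔞
  have key : ∀ i ∈ B, (∏ j ∈ B, g j) * f i ∈ 𝔞 := by
    intro i hi
    have : (∏ j ∈ B, g j) * f i = (∏ j ∈ B.erase i, g j) * (f i * g i) := by
      rw [← Finset.mul_prod_erase B g hi]; ring
    rw [this]
    exact Ideal.mul_mem_left _ _ (hgen i)
  -- f restricted to B is linearly independent
  have hindB : LinearIndependent k (fun i : (↑B : Set (Fin n)) => f i) :=
    (hM ↑B).mp hB.indep
  have hinjB : Set.InjOn f ↑B := by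
    intro x hx y hy hxy
    have := hindB.injective (a₁ := ⟨x, hx⟩) (a₂ := ⟨y, hy⟩) (by simpa using hxy)
    simpa using Subtype.ext_iff.mp this
  -- f a is in the k-span of f '' B
  have hspan : f a ∈ Submodule.span k (f '' ↑B) := by
    by_cases ha : a ∈ B
    · exact Submodule.subset_span ⟨a, ha, rfl⟩
    · by_contra h
      have hfa : f a ∉ f '' (↑B : Set (Fin n)) := fun hm => h (Submodule.subset_span hm)
      -- insert a B is dependent in M
      have hdep : ¬ M.Indep (insert a (↑B : Set (Fin n))) := by
        have : M.Dep (insert a ↑B) := hB.insert_dep ⟨by rw [hE]; trivial, ha⟩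
        exact this.not_indep
      apply hdep
      rw [hM]
      have hinj : Set.InjOn f (insert a (↑B : Set (Fin n))) := by
        intro x hx y hy hxy
        rcases hx with rfl | hx
        · rcases hy with rfl | hy
          · rfl
          · exact absurd ⟨y, hy, hxy.symm⟩ hfa
        · rcases hy with rfl | hy
          · exact absurd ⟨x, hx, hxy⟩ hfa
          · exact hinjB hx hy hxy
      rw [linearIndependent_set_coe_iff, linearIndepOn_iff_image hinj]
      rw [Set.image_insert_eq]
      rw [linearIndepOn_id_insert hfa]
      refine ⟨?_, h⟩
      rw [← linearIndepOn_iff_image hinjB]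
      exact hindB
  -- conclude by span induction
  refine Submodule.span_induction (p := fun x _ => (∏ i ∈ B, g i) * x ∈ 𝔞) ?_ ?_ ?_ ?_ hspan
  · rintro x ⟨i, hi, rfl⟩
    exact key i hi
  · simpa using 𝔞.zero_mem
  · intro x y _ _ hx hy
    rw [mul_add]; exact 𝔞.add_mem hx hy
  · intro c x _ hx
    rw [mul_smul_comm, Algebra.smul_def]
    exact Ideal.mul_mem_left _ _ hx
end

section
/- Let M be a loopless and coloopless matroid realized by W, with ideal of pairs 𝔞 ⊆ S. Then the ideals 𝔭_{[n],∅} = (f₁,…,fₙ) and 𝔭_{∅,[n]} = (g₁,…,gₙ) are minimal primes of S/𝔞. -/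
open MvPolynomial

variable {k : Type} [Field k] {n : ℕ}

private lemma degree_one_single {d : Fin n →₀ ℕ} (hd : Finsupp.degree d = 1) :
    ∃ j, d = Finsupp.single j 1 := by
  have h0 : d ≠ 0 := by rintro rfl; simp [Finsupp.degree] at hd
  obtain ⟨j, hj⟩ : ∃ j, d j ≠ 0 := by
    by_contra hcon; push_neg at hcon; exact h0 (Finsupp.ext fun a => hcon a)
  have hj1 : d j = 1 := le_antisymm (hd ▸ Finsupp.le_degree j d) (Nat.one_le_iff_ne_zero.2 hj)
  refine ⟨j, Finsupp.ext fun i => ?_⟩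
  rcases eq_or_ne i j with rfl | hij
  · simp [hj1]
  · rw [Finsupp.single_apply, if_neg (fun hh => hij (hh.symm))]
    by_contra hi
    have hsub : ({i, j} : Finset (Fin n)) ⊆ d.support := by
      intro x hx
      simp only [Finset.mem_insert, Finset.mem_singleton] at hx
      rcases hx with rfl | rfl <;> simp [Finsupp.mem_support_iff, hi, hj]
    have hle := Finset.sum_le_sum_of_subset (f := fun x => d x) hsub
    rw [Finset.sum_pair hij] at hle
    have : 2 ≤ Finsupp.degree d := le_trans (by omega) hle
    omega

private lemma homog_one_mem_spanX {p : MvPolynomial (Fin n) k} (hp : p.IsHomogeneous 1) :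
    p ∈ Submodule.span k (Set.range (X : Fin n → MvPolynomial (Fin n) k)) := by
  rw [p.as_sum]
  refine Submodule.sum_mem _ fun d hd => ?_
  have hdeg : Finsupp.degree d = 1 := by
    have := hp (MvPolynomial.mem_support_iff.1 hd)
    rw [Finsupp.degree_eq_weight_one]; exact this
  obtain ⟨j, rfl⟩ := degree_one_single hdeg
  have heq : (monomial (Finsupp.single j 1)) (coeff (Finsupp.single j 1) p)
      = coeff (Finsupp.single j 1) p • X j := by
    rw [MvPolynomial.X, MvPolynomial.smul_monomial, smul_eq_mul, mul_one]
  rw [heq]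
  exact Submodule.smul_mem _ _ (Submodule.subset_span ⟨j, rfl⟩)

private lemma key {h : Fin n → MvPolynomial (Fin n) k} (hh : ∀ i, (h i).IsHomogeneous 1) :
    (Ideal.span (Set.range h)).IsPrime ∧
    ∀ p : MvPolynomial (Fin n) k, p.IsHomogeneous 1 → p ∈ Ideal.span (Set.range h) →
      p ∈ Submodule.span k (Set.range h) := by
  have S := MvPolynomial (Fin n) k
  clear S
  set V : Submodule k (MvPolynomial (Fin n) k) := Submodule.span k (Set.range h) with hV
  obtain ⟨C, hC⟩ := Submodule.exists_isCompl V
  set σp : MvPolynomial (Fin n) k →ₗ[k] MvPolynomial (Fin n) k := V.subtype.comp (Submodule.linearProjOfIsCompl V C hC) with hσp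
  set φ : MvPolynomial (Fin n) k →ₐ[k] MvPolynomial (Fin n) k := aeval (fun j => X j - σp (X j)) with hφ
  have hσV : ∀ x ∈ V, σp x = x := by
    intro x hx
    simp only [hσp, LinearMap.comp_apply, Submodule.subtype_apply]
    have hx2 : (V.linearProjOfIsCompl C hC) x = ⟨x, hx⟩ :=
      Submodule.linearProjOfIsCompl_apply_left hC ⟨x, hx⟩
    rw [hx2]
  have hVI : V ≤ Submodule.restrictScalars k
      ((Ideal.span (Set.range h)).restrictScalars k) := by
    rw [hV, Submodule.span_le]
    exact fun x hx => Ideal.subset_span hx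
  -- φ agrees with id - σp on homogeneous degree-1 polynomials
  have hφ1 : ∀ p : MvPolynomial (Fin n) k, p.IsHomogeneous 1 → φ p = p - σp p := by
    intro p hp
    have := LinearMap.eqOn_span (f := φ.toLinearMap) (g := LinearMap.id - σp)
      (s := Set.range (X : Fin n → MvPolynomial (Fin n) k)) ?_ (homog_one_mem_spanX hp)
    · simpa using this
    · rintro x ⟨j, rfl⟩
      simp [hφ]
  have hφh : ∀ i, φ (h i) = 0 := by
    intro i
    rw [hφ1 _ (hh i), hσV _ (Submodule.subset_span ⟨i, rfl⟩), sub_self]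
  have hker : RingHom.ker (φ : MvPolynomial (Fin n) k →+* MvPolynomial (Fin n) k) = Ideal.span (Set.range h) := by
    apply le_antisymm
    · -- mk ∘ φ = mk
      intro p hp
      have hq : (Ideal.Quotient.mkₐ k (Ideal.span (Set.range h))).comp φ
          = Ideal.Quotient.mkₐ k (Ideal.span (Set.range h)) := by
        apply MvPolynomial.algHom_ext
        intro j
        simp only [AlgHom.comp_apply, hφ, aeval_X]
        have : σp (X j) ∈ Ideal.span (Set.range h) := by
          rcases hC with _
          have : σp (X j) ∈ V := by
            simp only [hσp, LinearMap.comp_apply, Submodule.subtype_apply]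
            exact Submodule.coe_mem _
          exact hVI this
        rw [map_sub, Ideal.Quotient.mkₐ_eq_mk, Ideal.Quotient.eq_zero_iff_mem.2 this, sub_zero]
      have := congrArg (fun ψ : MvPolynomial (Fin n) k →ₐ[k] MvPolynomial (Fin n) k ⧸ Ideal.span (Set.range h) => ψ p) hq
      simp only [AlgHom.comp_apply, Ideal.Quotient.mkₐ_eq_mk] at this
      rw [show φ p = 0 from hp, map_zero] at this
      exact Ideal.Quotient.eq_zero_iff_mem.1 this.symm
    · rw [Ideal.span_le]
      rintro x ⟨i, rfl⟩
      exact hφh i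
  constructor
  · rw [← hker]
    exact RingHom.ker_isPrime _
  · intro p hp hpI
    have : φ p = 0 := by rw [← hker] at hpI; exact hpI
    rw [hφ1 _ hp] at this
    have hps : p = σp p := by linear_combination (norm := module) this
    rw [hps]
    simp only [hσp, LinearMap.comp_apply, Submodule.subtype_apply]
    exact Submodule.coe_mem _

private lemma span_range_le {M : Matroid (Fin n)} {f : Fin n → MvPolynomial (Fin n) k}
    (hM : ∀ I : Set (Fin n), M.Indep I ↔ LinearIndependent k (fun i : I => f i))
    {B : Set (Fin n)} (hB : M.IsBase B) :
    Submodule.span k (Set.range f) ≤ Submodule.span k (f '' B) := by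
  rw [Submodule.span_le]
  rintro x ⟨i, rfl⟩
  by_cases hiB : i ∈ B
  · exact Submodule.subset_span ⟨i, hiB, rfl⟩
  · have hindep : ¬ M.Indep (insert i B) := fun hcon => hiB (hB.mem_of_insert_indep hcon)
    rw [hM] at hindep
    change ¬ LinearIndepOn k f (insert i B) at hindep
    rw [linearIndepOn_insert hiB] at hindep
    by_contra hni
    exact hindep ⟨(hM B).1 hB.indep, hni⟩

private lemma finrank_span_range_le {M : Matroid (Fin n)} {f : Fin n → MvPolynomial (Fin n) k}
    (hM : ∀ I : Set (Fin n), M.Indep I ↔ LinearIndependent k (fun i : I => f i))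
    {B : Set (Fin n)} (hB : M.IsBase B) :
    Module.finrank k (Submodule.span k (Set.range f)) ≤ B.ncard := by
  classical
  haveI := FiniteDimensional.span_of_finite k (B.toFinite.image f)
  refine le_trans (Submodule.finrank_mono (span_range_le hM hB)) ?_
  haveI : Fintype ↥(f '' B) := (B.toFinite.image f).fintype
  refine le_trans (finrank_span_le_card (f '' B)) ?_
  rw [show (f '' B).toFinset.card = (f '' B).ncard from (Set.ncard_eq_toFinset_card' _).symm]
  exact Set.ncard_image_le B.toFinite

/-- Let `M` be a loopless and coloopless matroid realized by `W`, with
ideal of pairs `𝔞 ⊆ S`.  Then `𝔭_{[n],∅} = (f 1, …, f n)` and `𝔭_{∅,[n]} = (g 1, …, g n)`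
are minimal primes of `S/𝔞`. -/
theorem span_f_and_span_g_minimalPrimes
    (k : Type) [Field k] (n r : ℕ)
    (M : Matroid (Fin n)) (hE : M.E = Set.univ)
    (hloopless : ∀ i : Fin n, M.Indep {i})
    (hcoloopless : ∀ i : Fin n, M✶.Indep {i})
    (f g : Fin n → MvPolynomial (Fin n) k)
    (hf1 : ∀ i, (f i).IsHomogeneous 1) (hg1 : ∀ i, (g i).IsHomogeneous 1)
    -- `f` realizes `M` and `g` realizes the dual matroid `M✶`:
    (hM : ∀ I : Set (Fin n), M.Indep I ↔ LinearIndependent k (fun i : I => f i))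
    (hMd : ∀ I : Set (Fin n), M✶.Indep I ↔ LinearIndependent k (fun i : I => g i))
    -- the `f i` and `g i` together span the space of linear forms, i.e. `S = k[W ⊕ W^⊥]`:
    (hspan : ∀ j : Fin n, (X j : MvPolynomial (Fin n) k)
      ∈ Submodule.span k (Set.range f ∪ Set.range g))
    -- the ideal of pairs:
    (𝔞 : Ideal (MvPolynomial (Fin n) k))
    (h𝔞 : 𝔞 = Ideal.span (Set.range fun i => f i * g i)) :
    Ideal.span (Set.range f) ∈ 𝔞.minimalPrimes ∧
    Ideal.span (Set.range g) ∈ 𝔞.minimalPrimes := by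

  classical
  obtain ⟨hfPrime, hfHom⟩ := key hf1
  obtain ⟨hgPrime, hgHom⟩ := key hg1
  obtain ⟨B, hB⟩ := M.exists_isBase
  have hBc : M✶.IsBase Bᶜ := by
    have h2 := hB.compl_isBase_dual
    rw [hE] at h2
    rwa [Set.compl_eq_univ_diff]
  set Vf := Submodule.span k (Set.range f) with hVf
  set Vg := Submodule.span k (Set.range g) with hVg
  haveI : FiniteDimensional k Vf := FiniteDimensional.span_of_finite k (Set.finite_range f)
  haveI : FiniteDimensional k Vg := FiniteDimensional.span_of_finite k (Set.finite_range g)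
  have hdimf : Module.finrank k Vf ≤ B.ncard := finrank_span_range_le hM hB
  have hdimg : Module.finrank k Vg ≤ Bᶜ.ncard := finrank_span_range_le hMd hBc
  have hsum : B.ncard + Bᶜ.ncard = n := by
    simpa using B.ncard_add_ncard_compl
  have hsupFD : FiniteDimensional k ↥(Vf ⊔ Vg) := by
    rw [hVf, hVg, ← Submodule.span_union]
    exact FiniteDimensional.span_of_finite k ((Set.finite_range f).union (Set.finite_range g))
  have hn : n ≤ Module.finrank k ↥(Vf ⊔ Vg) := by
    have hle : Submodule.span k (Set.range (X : Fin n → MvPolynomial (Fin n) k)) ≤ Vf ⊔ Vg := by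
      rw [Submodule.span_le]
      rintro x ⟨j, rfl⟩
      rw [hVf, hVg, ← Submodule.span_union]
      exact hspan j
    have h1 : Module.finrank k
        (Submodule.span k (Set.range (X : Fin n → MvPolynomial (Fin n) k))) = n := by
      rw [finrank_span_eq_card (MvPolynomial.linearIndependent_X (Fin n) k)]
      simp
    calc n = _ := h1.symm
      _ ≤ _ := Submodule.finrank_mono hle
  have hinf : Vf ⊓ Vg = ⊥ := by
    have heq := Submodule.finrank_sup_add_finrank_inf_eq Vf Vg
    have h0 : Module.finrank k ↥(Vf ⊓ Vg) = 0 := by omega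
    rwa [Submodule.finrank_eq_zero] at h0
  have hg0 : ∀ i, g i ≠ 0 := fun i =>
    ((hMd {i}).1 (hcoloopless i)).ne_zero ⟨i, rfl⟩
  have hf0 : ∀ i, f i ≠ 0 := fun i =>
    ((hM {i}).1 (hloopless i)).ne_zero ⟨i, rfl⟩
  have hgnotf : ∀ i, g i ∉ Ideal.span (Set.range f) := by
    intro i hi
    have h1 : g i ∈ Vf := hfHom _ (hg1 i) hi
    have h2 : g i ∈ Vg := Submodule.subset_span ⟨i, rfl⟩
    have : g i ∈ Vf ⊓ Vg := ⟨h1, h2⟩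
    rw [hinf] at this
    exact hg0 i this
  have hfnotg : ∀ i, f i ∉ Ideal.span (Set.range g) := by
    intro i hi
    have h1 : f i ∈ Vg := hgHom _ (hf1 i) hi
    have h2 : f i ∈ Vf := Submodule.subset_span ⟨i, rfl⟩
    have : f i ∈ Vf ⊓ Vg := ⟨h2, h1⟩
    rw [hinf] at this
    exact hf0 i this
  subst h𝔞
  constructor
  · refine ⟨⟨hfPrime, ?_⟩, ?_⟩
    · rw [Ideal.span_le]
      rintro x ⟨i, rfl⟩
      exact Ideal.mul_mem_right _ _ (Ideal.subset_span ⟨i, rfl⟩)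
    · rintro P ⟨hP, haP⟩ hPle
      rw [Ideal.span_le]
      rintro x ⟨i, rfl⟩
      rcases hP.mem_or_mem (haP (Ideal.subset_span ⟨i, rfl⟩)) with hmem | hmem
      · exact hmem
      · exact absurd (hPle hmem) (hgnotf i)
  · refine ⟨⟨hgPrime, ?_⟩, ?_⟩
    · rw [Ideal.span_le]
      rintro x ⟨i, rfl⟩
      exact Ideal.mul_mem_left _ _ (Ideal.subset_span ⟨i, rfl⟩)
    · rintro P ⟨hP, haP⟩ hPle
      rw [Ideal.span_le]
      rintro x ⟨i, rfl⟩
      rcases hP.mem_or_mem (haP (Ideal.subset_span ⟨i, rfl⟩)) with hmem | hmem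
      · exact absurd (hPle hmem) (hfnotg i)
      · exact hmem
end
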